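/- Let μ ∈ (1,2) and n ≥ 1. If x, x' ∈ [0,1) satisfy γ^n(x) = γ^n(x'), then |f^n(x) − f^n(x')| = μ^n · |x − x'|. -/
import Mathlib


open Set MeasureTheory

/-- The tent map `f(x) = μx` for `x ≤ 1/2` and `μ(1-x)` for `x ≥ 1/2`. -/
noncomputable def tentMap (μ : ℝ) (x : ℝ) : ℝ :=
  if x ≤ 1/2 then μ * x else μ * (1 - x)

/-- `tentBit μ x k` is the `(k+1)`-st bit `b_{k+1}` of the tent code of `x`. -/
noncomputable def tentBit (μ x : ℝ) : ℕ → Bool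
  | 0 => if 1/2 ≤ x then true else false
  | k + 1 =>
    if (tentMap μ)^[k+1] x < 1/2 then tentBit μ x k
    else if 1/2 < (tentMap μ)^[k+1] x then !(tentBit μ x k)
    else true

/-- The tent code `γ^n(x) = b_1 ⋯ b_n`. -/
noncomputable def tentCode (μ : ℝ) (n : ℕ) (x : ℝ) : List Bool :=
  (List.range n).map (tentBit μ x)

/-- The tent language `L_n = {γ^n(x) : x ∈ [0,1)}`. -/
def tentLang (μ : ℝ) (n : ℕ) : Set (List Bool) :=
  {w | ∃ x ∈ Set.Ico (0:ℝ) 1, tentCode μ n x = w}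

/-- The segment-type `T(w) = {f^n(x) : x ∈ [0,1), γ^n(x) = w}`. -/
def segType (μ : ℝ) (n : ℕ) (w : List Bool) : Set ℝ :=
  {y | ∃ x ∈ Set.Ico (0:ℝ) 1, tentCode μ n x = w ∧ (tentMap μ)^[n] x = y}

/-- The set of segment-types `𝒯_n = {T(w) : w ∈ L_n}`. -/
def typeSet (μ : ℝ) (n : ℕ) : Set (Set ℝ) :=
  {S | ∃ w ∈ tentLang μ n, segType μ n w = S}

/-- `I_i = T(γ^i(1/2))`. -/
noncomputable def Iseg (μ : ℝ) (i : ℕ) : Set ℝ :=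
  segType μ i (tentCode μ i (1/2))

/-- `Ī_i = T(c̄_i)` where `c̄_i` is the bitwise complement of `γ^i(1/2)`. -/
noncomputable def Isegbar (μ : ℝ) (i : ℕ) : Set ℝ :=
  segType μ i ((tentCode μ i (1/2)).map (fun b => !b))

/-- The length of the interval `T(w)` (zero if `T(w)` is empty). -/
noncomputable def segLen (μ : ℝ) (n : ℕ) (w : List Bool) : ℝ :=
  (MeasureTheory.volume (segType μ n w)).toReal

lemma tentMap_of_ge (μ a : ℝ) (h : 1/2 ≤ a) : tentMap μ a = μ * (1 - a) := by
  unfold tentMap; split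
  · have : a = 1/2 := le_antisymm ‹_› h
    subst this; norm_num
  · rfl

lemma tentMap_dist (μ : ℝ) (hμ : 0 < μ) (a b : ℝ)
    (h : (a ≤ 1/2 ∧ b ≤ 1/2) ∨ (1/2 ≤ a ∧ 1/2 ≤ b)) :
    |tentMap μ a - tentMap μ b| = μ * |a - b| := by
  rcases h with ⟨ha, hb⟩ | ⟨ha, hb⟩
  · simp only [tentMap, if_pos ha, if_pos hb]
    rw [← mul_sub, abs_mul, abs_of_pos hμ]
  · rw [tentMap_of_ge μ a ha, tentMap_of_ge μ b hb]
    have h2 : μ*(1-a) - μ*(1-b) = -(μ*(a-b)) := by ring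
    rw [h2, abs_neg, abs_mul, abs_of_pos hμ]

lemma sideStep (μ x x' : ℝ) (j : ℕ)
    (h1 : tentBit μ x j = tentBit μ x' j)
    (h2 : tentBit μ x (j+1) = tentBit μ x' (j+1)) :
    ((tentMap μ)^[j+1] x ≤ 1/2 ∧ (tentMap μ)^[j+1] x' ≤ 1/2) ∨
    (1/2 ≤ (tentMap μ)^[j+1] x ∧ 1/2 ≤ (tentMap μ)^[j+1] x') := by
  simp only [tentBit] at h2
  rcases lt_trichotomy ((tentMap μ)^[j+1] x) (1/2) with ha | ha | ha <;>
    rcases lt_trichotomy ((tentMap μ)^[j+1] x') (1/2) with hb | hb | hb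
  · exact Or.inl ⟨ha.le, hb.le⟩
  · exact Or.inl ⟨ha.le, hb.le⟩
  · rw [if_pos ha, if_neg (lt_asymm hb), if_pos hb, h1] at h2
    simp at h2
  · exact Or.inl ⟨ha.le, hb.le⟩
  · exact Or.inr ⟨ha.ge, hb.ge⟩
  · exact Or.inr ⟨ha.ge, hb.le⟩
  · rw [if_neg (lt_asymm ha), if_pos ha, if_pos hb, h1] at h2
    simp at h2
  · exact Or.inr ⟨ha.le, hb.ge⟩
  · exact Or.inr ⟨ha.le, hb.le⟩

private lemma tent_iterate_dist_aux (μ : ℝ) (hμ1 : 1 < μ)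
    (n : ℕ) (x x' : ℝ)
    (hcode : (List.range n).map (tentBit μ x) = (List.range n).map (tentBit μ x')) :
    |(tentMap μ)^[n] x - (tentMap μ)^[n] x'| = μ ^ n * |x - x'| := by
  have hμ0 : 0 < μ := lt_trans one_pos hμ1
  induction n with
  | zero => simp
  | succ n ih =>
    have hbit : ∀ k < n+1, tentBit μ x k = tentBit μ x' k := by
      intro k hk
      have := List.map_eq_map_iff.mp hcode k (List.mem_range.mpr hk)
      exact this
    have ihc : (List.range n).map (tentBit μ x) = (List.range n).map (tentBit μ x') :=
      List.map_eq_map_iff.mpr fun k hk => hbit k (Nat.lt_succ_of_lt (List.mem_range.mp hk))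
    have ih' := ih ihc
    have hside : ((tentMap μ)^[n] x ≤ 1/2 ∧ (tentMap μ)^[n] x' ≤ 1/2) ∨
        (1/2 ≤ (tentMap μ)^[n] x ∧ 1/2 ≤ (tentMap μ)^[n] x') := by
      cases n with
      | zero =>
        have h0 := hbit 0 (by omega)
        simp only [tentBit] at h0
        simp only [Function.iterate_zero, id_eq]
        split_ifs at h0 with h h1 h2
        · exact Or.inr ⟨h, h1⟩
        · exact Or.inl ⟨le_of_not_ge h, le_of_not_ge h2⟩
      | succ j => exact sideStep μ x x' j (hbit j (by omega)) (hbit (j+1) (by omega))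
    rw [Function.iterate_succ_apply', Function.iterate_succ_apply',
      tentMap_dist μ hμ0 _ _ hside, ih', pow_succ]
    ring

/-- `|f^n(x) - f^n(x')| = μ^n |x - x'|` if the `n`-bit codes coincide. -/
theorem tent_iterate_dist_of_code_eq (μ : ℝ) (hμ1 : 1 < μ) (hμ2 : μ < 2)
    (n : ℕ) (hn : 1 ≤ n) (x x' : ℝ) (hx : x ∈ Set.Ico (0:ℝ) 1) (hx' : x' ∈ Set.Ico (0:ℝ) 1)
    (hcode : tentCode μ n x = tentCode μ n x') :
    |(tentMap μ)^[n] x - (tentMap μ)^[n] x'| = μ ^ n * |x - x'| := by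
  simp only [tentCode] at hcode
  exact tent_iterate_dist_aux μ hμ1 n x x' hcode
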